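/- Let P be a finite poset on V with |V| = n. The order polytope O(P) = {x ∈ [0,1]^V : x_v ≤ x_w whenever v ≤_P w} has volume e(P)/n!, where e(P) is the number of linear extensions of P. -/
import Mathlib


open Finset MeasureTheory

/-- The number of linear extensions of a finite poset, counted as order-preserving
bijections to `Fin n`. -/
noncomputable def numLinExt (V : Type*) [Fintype V] [PartialOrder V] : ℕ :=
  Nat.card {σ : V ≃ Fin (Fintype.card V) // ∀ x y : V, x ≤ y → σ x ≤ σ y}

/-- The order polytope of a poset. -/
def orderPolytope (V : Type*) [PartialOrder V] : Set (V → ℝ) :=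
  {x | (∀ v, x v ∈ Set.Icc (0 : ℝ) 1) ∧ ∀ v w : V, v ≤ w → x v ≤ x w}

namespace StanleyAux

set_option linter.unusedSectionVars false

variable {V : Type*} [Fintype V] [PartialOrder V]

/-- The simplex of the unit cube associated to a bijection `σ : V ≃ Fin n`. -/
def S (σ : V ≃ Fin (Fintype.card V)) : Set (V → ℝ) :=
  {x | (∀ v, x v ∈ Set.Icc (0 : ℝ) 1) ∧ ∀ v w : V, σ v ≤ σ w → x v ≤ x w}

/-- The "diagonal" null set. -/
def N (V : Type*) : Set (V → ℝ) := {x | ∃ v w : V, v ≠ w ∧ x v = x w}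

lemma measurableSet_cube : MeasurableSet {x : V → ℝ | ∀ v, x v ∈ Set.Icc (0 : ℝ) 1} := by
  have : {x : V → ℝ | ∀ v, x v ∈ Set.Icc (0 : ℝ) 1}
      = Set.pi Set.univ (fun _ : V => Set.Icc (0 : ℝ) 1) := by
    ext x; simp only [Set.mem_univ_pi, Set.mem_setOf_eq]
  rw [this]
  exact MeasurableSet.univ_pi fun _ => measurableSet_Icc

lemma measurableSet_order {r : V → V → Prop} :
    MeasurableSet {x : V → ℝ | ∀ v w : V, r v w → x v ≤ x w} := by
  have : {x : V → ℝ | ∀ v w : V, r v w → x v ≤ x w}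
      = ⋂ v, ⋂ w, {x : V → ℝ | r v w → x v ≤ x w} := by
    ext x; simp
  rw [this]
  refine MeasurableSet.iInter fun v => MeasurableSet.iInter fun w => ?_
  by_cases h : r v w
  · simp only [h, forall_true_left]
    exact measurableSet_le (measurable_pi_apply v) (measurable_pi_apply w)
  · simp [h]

lemma measurableSet_S (σ : V ≃ Fin (Fintype.card V)) : MeasurableSet (S σ) :=
  measurableSet_cube.inter measurableSet_order

lemma measurableSet_orderPolytope : MeasurableSet (orderPolytope V) :=
  measurableSet_cube.inter measurableSet_order

lemma null_pair {v w : V} (h : v ≠ w) : volume {x : V → ℝ | x v = x w} = 0 := by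
  classical
  have heq : {x : V → ℝ | x v = x w} =
      ↑(LinearMap.ker ((LinearMap.proj v : (V → ℝ) →ₗ[ℝ] ℝ) - LinearMap.proj w)) := by
    ext x
    simp [LinearMap.mem_ker, sub_eq_zero]
  rw [heq]
  apply Measure.addHaar_submodule
  intro htop
  rw [LinearMap.ker_eq_top] at htop
  have := LinearMap.congr_fun htop (Pi.single v 1)
  simp [Pi.single_apply, h.symm] at this

lemma null_N : volume (N V) = 0 := by
  have : N V ⊆ ⋃ v : V, ⋃ w : V, ⋃ _ : v ≠ w, {x : V → ℝ | x v = x w} := by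
    rintro x ⟨v, w, hvw, hx⟩
    exact Set.mem_iUnion.2 ⟨v, Set.mem_iUnion.2 ⟨w, Set.mem_iUnion.2 ⟨hvw, hx⟩⟩⟩
  refine measure_mono_null this ?_
  exact measure_iUnion_null fun v => measure_iUnion_null fun w => measure_iUnion_null fun h =>
    null_pair h

lemma measurableSet_N : MeasurableSet (N V) := by
  have : N V = ⋃ v : V, ⋃ w : V, ⋃ _ : v ≠ w, {x : V → ℝ | x v = x w} := by
    ext x
    simp only [Set.mem_iUnion, N, Set.mem_setOf_eq]
    tauto
  rw [this]
  exact MeasurableSet.iUnion fun v => MeasurableSet.iUnion fun w =>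
    MeasurableSet.iUnion fun _ =>
      measurableSet_eq_fun (measurable_pi_apply v) (measurable_pi_apply w)

/-- Any injective point of the cube lies in some simplex, sorted by a bijection
compatible with the values of `x`. -/
lemma exists_sort {x : V → ℝ} (hx : Function.Injective x) :
    ∃ σ : V ≃ Fin (Fintype.card V), ∀ v w, σ v ≤ σ w ↔ x v ≤ x w := by
  classical
  set s : Finset ℝ := Finset.univ.image x with hs
  have hcard : s.card = Fintype.card V := by
    rw [hs, Finset.card_image_of_injective _ hx, Finset.card_univ]
  let g : V ≃ s := Equiv.ofBijective
    (fun v => ⟨x v, Finset.mem_image_of_mem x (Finset.mem_univ v)⟩)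
    ⟨fun a b hab => hx (by simpa using hab), by
      rintro ⟨a, ha⟩
      obtain ⟨v, -, rfl⟩ := Finset.mem_image.1 ha
      exact ⟨v, rfl⟩⟩
  refine ⟨g.trans (s.orderIsoOfFin hcard).symm.toEquiv, fun v w => ?_⟩
  simp only [Equiv.trans_apply, RelIso.coe_fn_toEquiv]
  rw [OrderIso.le_iff_le]
  rw [← Subtype.coe_le_coe]
  exact Iff.rfl

/-- If `x` is injective and lies in `S σ`, then `σ` sorts `x`. -/
lemma sort_of_mem_S {x : V → ℝ} (hx : Function.Injective x)
    {σ : V ≃ Fin (Fintype.card V)} (hmem : x ∈ S σ) :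
    ∀ v w, σ v ≤ σ w ↔ x v ≤ x w := by
  intro v w
  refine ⟨hmem.2 v w, fun hle => ?_⟩
  by_contra hc
  have h1 : σ w ≤ σ v := le_of_not_ge hc
  have h2 : x w ≤ x v := hmem.2 w v h1
  have : v = w := hx (le_antisymm hle h2)
  exact hc (this ▸ le_refl _)

/-- Two bijections sorting the same injective `x` coincide. -/
lemma sort_unique {x : V → ℝ} {σ τ : V ≃ Fin (Fintype.card V)}
    (hσ : ∀ v w, σ v ≤ σ w ↔ x v ≤ x w) (hτ : ∀ v w, τ v ≤ τ w ↔ x v ≤ x w) :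
    σ = τ := by
  have key : ∀ i j : Fin (Fintype.card V),
      (σ.symm.trans τ) i ≤ (σ.symm.trans τ) j ↔ i ≤ j := by
    intro i j
    simp only [Equiv.trans_apply]
    rw [hτ]
    conv_rhs => rw [← σ.apply_symm_apply i, ← σ.apply_symm_apply j]
    rw [hσ]
  let o : Fin (Fintype.card V) ≃o Fin (Fintype.card V) :=
    { σ.symm.trans τ with map_rel_iff' := key _ _ }
  have ho : ∀ i, o i = i := fun i => Fin.ext (Fin.coe_orderIso_apply o i)
  ext v
  have := ho (σ v)
  have h2 : τ v = σ v := by simpa [o, Equiv.trans_apply] using this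
  exact congrArg Fin.val h2.symm

lemma volume_S_eq (σ τ : V ≃ Fin (Fintype.card V)) : volume (S σ) = volume (S τ) := by
  have hmp := volume_measurePreserving_piCongrLeft (fun _ : V => ℝ) (σ.trans τ.symm)
  have hpre : (MeasurableEquiv.piCongrLeft (fun _ : V => ℝ) (σ.trans τ.symm)) ⁻¹' (S τ) = S σ := by
    ext x
    rw [Set.mem_preimage, MeasurableEquiv.coe_piCongrLeft]
    have happ : ∀ v : V, (Equiv.piCongrLeft (fun _ : V => ℝ) (σ.trans τ.symm)) x v
        = x ((σ.trans τ.symm).symm v) := fun v => by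
      rw [Equiv.piCongrLeft_apply_eq_cast]; exact cast_eq _ _
    constructor
    · rintro ⟨h1, h2⟩
      constructor
      · intro v
        have := h1 ((σ.trans τ.symm) v)
        rwa [happ, Equiv.symm_apply_apply] at this
      · intro v w hvw
        have := h2 ((σ.trans τ.symm) v) ((σ.trans τ.symm) w)
          (by simpa [Equiv.trans_apply] using hvw)
        rwa [happ, happ, Equiv.symm_apply_apply, Equiv.symm_apply_apply] at this
    · rintro ⟨h1, h2⟩
      constructor
      · intro v; rw [happ]; exact h1 _
      · intro v w hvw
        rw [happ, happ]
        apply h2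
        simpa [Equiv.trans_apply] using hvw
  calc volume (S σ) = volume ((MeasurableEquiv.piCongrLeft (fun _ : V => ℝ)
        (σ.trans τ.symm)) ⁻¹' (S τ)) := by rw [hpre]
    _ = volume (S τ) := hmp.measure_preimage (measurableSet_S τ).nullMeasurableSet

lemma injective_of_notMem_N {x : V → ℝ} (hx : x ∉ N V) : Function.Injective x := by
  intro a b hab
  by_contra h
  exact hx ⟨a, b, h, hab⟩

lemma disjoint_S : Pairwise (Function.onFun Disjoint
    (fun σ : V ≃ Fin (Fintype.card V) => S σ \ N V)) := by
  intro σ τ hst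
  rw [Function.onFun, Set.disjoint_left]
  rintro x ⟨hxσ, hxN⟩ ⟨hxτ, -⟩
  have hinj := injective_of_notMem_N hxN
  exact hst (sort_unique (sort_of_mem_S hinj hxσ) (sort_of_mem_S hinj hxτ))

lemma cube_diff_subset :
    {x : V → ℝ | ∀ v, x v ∈ Set.Icc (0 : ℝ) 1} \ N V ⊆
      ⋃ σ : V ≃ Fin (Fintype.card V), (S σ \ N V) := by
  rintro x ⟨hx, hxN⟩
  obtain ⟨σ, hσ⟩ := exists_sort (injective_of_notMem_N hxN)
  exact Set.mem_iUnion.2 ⟨σ, ⟨⟨hx, fun v w h => (hσ v w).1 h⟩, hxN⟩⟩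

lemma volume_cube : volume {x : V → ℝ | ∀ v, x v ∈ Set.Icc (0 : ℝ) 1} = 1 := by
  have : {x : V → ℝ | ∀ v, x v ∈ Set.Icc (0 : ℝ) 1}
      = Set.pi Set.univ (fun _ : V => Set.Icc (0 : ℝ) 1) := by
    ext x; simp only [Set.mem_univ_pi, Set.mem_setOf_eq]
  rw [this, volume_pi_pi]
  simp [Real.volume_Icc]

lemma volume_S_val (σ : V ≃ Fin (Fintype.card V)) :
    volume (S σ) = ((Nat.factorial (Fintype.card V) : ENNReal))⁻¹ := by
  classical
  have hall : ∀ τ : V ≃ Fin (Fintype.card V), volume (S τ) = volume (S σ) :=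
    fun τ => volume_S_eq τ σ
  have hU : volume (⋃ τ : V ≃ Fin (Fintype.card V), (S τ \ N V)) = 1 := by
    apply le_antisymm
    · calc volume (⋃ τ : V ≃ Fin (Fintype.card V), (S τ \ N V))
          ≤ volume {x : V → ℝ | ∀ v, x v ∈ Set.Icc (0 : ℝ) 1} := by
            apply measure_mono
            exact Set.iUnion_subset fun τ => (Set.diff_subset).trans (fun x hx => hx.1)
        _ = 1 := volume_cube
    · calc (1 : ENNReal) = volume {x : V → ℝ | ∀ v, x v ∈ Set.Icc (0 : ℝ) 1} :=
            volume_cube.symm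
        _ = volume ({x : V → ℝ | ∀ v, x v ∈ Set.Icc (0 : ℝ) 1} \ N V) :=
            (measure_diff_null null_N).symm
        _ ≤ volume (⋃ τ : V ≃ Fin (Fintype.card V), (S τ \ N V)) :=
            measure_mono cube_diff_subset
  rw [measure_iUnion disjoint_S
      (fun τ => (measurableSet_S τ).diff measurableSet_N)] at hU
  have hterm : ∀ τ : V ≃ Fin (Fintype.card V), volume (S τ \ N V) = volume (S σ) :=
    fun τ => by rw [measure_diff_null null_N, hall]
  rw [tsum_congr hterm, tsum_fintype, Finset.sum_const, Finset.card_univ,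
    Fintype.card_equiv σ] at hU
  have hfact0 : ((Nat.factorial (Fintype.card V) : ℕ) : ENNReal) ≠ 0 := by
    simp [Nat.factorial_ne_zero]
  have hfactT : ((Nat.factorial (Fintype.card V) : ℕ) : ENNReal) ≠ ⊤ :=
    ENNReal.natCast_ne_top _
  have hsmul : ((Nat.factorial (Fintype.card V) : ℕ) : ENNReal) * volume (S σ) = 1 := by
    rw [← hU, nsmul_eq_mul]
  calc volume (S σ)
      = (((Nat.factorial (Fintype.card V) : ℕ) : ENNReal))⁻¹ *
        (((Nat.factorial (Fintype.card V) : ℕ) : ENNReal) * volume (S σ)) := by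
        rw [← mul_assoc, ENNReal.inv_mul_cancel hfact0 hfactT, one_mul]
    _ = (((Nat.factorial (Fintype.card V) : ℕ) : ENNReal))⁻¹ := by rw [hsmul, mul_one]

end StanleyAux

/-- Stanley: the volume of the order polytope of a finite poset `P` of order `n`
is `e(P)/n!`. -/
theorem volume_orderPolytope {V : Type*} [Fintype V] [PartialOrder V] :
    volume (orderPolytope V) =
      (numLinExt V : ENNReal) / (Nat.factorial (Fintype.card V) : ENNReal) := by
  classical
  open StanleyAux in
  have hUeq : (⋃ σ : {σ : V ≃ Fin (Fintype.card V) // ∀ x y : V, x ≤ y → σ x ≤ σ y},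
      (S σ.val \ N V)) = orderPolytope V \ N V := by
    apply Set.Subset.antisymm
    · rintro x hx
      obtain ⟨σ, hxσ, hxN⟩ := Set.mem_iUnion.1 hx
      refine ⟨⟨hxσ.1, fun v w hvw => hxσ.2 v w (σ.2 v w hvw)⟩, hxN⟩
    · rintro x ⟨hx, hxN⟩
      obtain ⟨σ, hσ⟩ := exists_sort (injective_of_notMem_N hxN)
      refine Set.mem_iUnion.2 ⟨⟨σ, fun v w hvw => (hσ v w).2 (hx.2 v w hvw)⟩, ?_⟩
      exact ⟨⟨hx.1, fun v w h => (hσ v w).1 h⟩, hxN⟩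
  have h1 : volume (orderPolytope V)
      = volume (⋃ σ : {σ : V ≃ Fin (Fintype.card V) // ∀ x y : V, x ≤ y → σ x ≤ σ y},
        (S σ.val \ N V)) := by
    rw [hUeq, measure_diff_null null_N]
  have hdisj : Pairwise (Function.onFun Disjoint
      (fun σ : {σ : V ≃ Fin (Fintype.card V) // ∀ x y : V, x ≤ y → σ x ≤ σ y}
        => S σ.val \ N V)) := by
    intro σ τ hst
    exact disjoint_S (fun h : σ.val = τ.val => hst (Subtype.ext h))
  have hmu := measure_iUnion (μ := volume) hdisj
    (fun σ => (measurableSet_S σ.val).diff measurableSet_N)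
  rw [h1, hmu]
  have hterm : ∀ σ : {σ : V ≃ Fin (Fintype.card V) // ∀ x y : V, x ≤ y → σ x ≤ σ y},
      volume (S σ.val \ N V) = ((Nat.factorial (Fintype.card V) : ℕ) : ENNReal)⁻¹ :=
    fun σ => by rw [measure_diff_null null_N, volume_S_val]
  rw [tsum_congr hterm, tsum_fintype, Finset.sum_const, Finset.card_univ]
  have hcard : Fintype.card
      {σ : V ≃ Fin (Fintype.card V) // ∀ x y : V, x ≤ y → σ x ≤ σ y} = numLinExt V := by
    rw [numLinExt, Nat.card_eq_fintype_card]
  rw [hcard, nsmul_eq_mul, div_eq_mul_inv]
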